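/- In a live-path graph with fixed negative seed set N₀, the influence blocking set satisfies the set-inclusion form of submodularity: for any S ⊆ T ⊆ V and any vertex v ∉ T ∪ N₀, IBS(T ∪ {v}) \ IBS(T) ⊆ IBS(S ∪ {v}) \ IBS(S). -/
import Mathlib


variable {V : Type*}

/-- There is a walk of length `n` (number of edges) from `u` to `w` along relation `E`. -/
inductive PathLen (E : V → V → Prop) : V → V → ℕ → Prop
  | refl (v : V) : PathLen E v v 0
  | tail {u v w : V} {n : ℕ} : PathLen E u v n → E v w → PathLen E u w (n + 1)

/-- Shortest-path distance (number of edges) from the set `S` to `v` along edges `E`,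
`⊤` if no path exists. -/
noncomputable def eDist (E : V → V → Prop) (S : Set V) (v : V) : ℕ∞ :=
  sInf {n : ℕ∞ | ∃ m : ℕ, n = (m : ℕ∞) ∧ ∃ s ∈ S, PathLen E s v m}

/-- An edge relation is "live-path" if every vertex has at most one in-edge. -/
def LivePathRel (E : V → V → Prop) : Prop :=
  ∀ ⦃u u' v : V⦄, E u v → E u' v → u = u'

/-- `l` is a path (list of successive vertices) along `E` from `s` to `v`. -/
def IsPathFrom (E : V → V → Prop) (l : List V) (s v : V) : Prop :=
  l.Chain' E ∧ l.head? = some s ∧ l.getLast? = some v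

/-- `l` is a shortest path along `E` from the set `S` to `v`:
it starts at some node of `S`, ends at `v`, and its number of edges equals `eDist E S v`. -/
def IsShortestPath (E : V → V → Prop) (S : Set V) (v : V) (l : List V) : Prop :=
  (∃ s ∈ S, IsPathFrom E l s v) ∧ (l.length : ℕ∞) = eDist E S v + 1

/-- `v` is negatively activated (-active) under positive seeds `S` and negative seeds `N₀`. -/
def NegActive (pos neg : V → V → Prop) (N₀ S : Set V) (v : V) : Prop :=
  eDist neg N₀ v < ⊤ ∧ eDist neg N₀ v ≤ eDist pos S v

/-- Influence blocking set: vertices -active with empty positive seed set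
but not -active with positive seed set `S`. -/
def IBS (pos neg : V → V → Prop) (N₀ S : Set V) : Set V :=
  {v | NegActive pos neg N₀ ∅ v ∧ ¬ NegActive pos neg N₀ S v}

lemma eDist_anti (E : V → V → Prop) {A B : Set V} (h : A ⊆ B) (v : V) :
    eDist E B v ≤ eDist E A v := by
  apply sInf_le_sInf
  rintro n ⟨m, rfl, s, hs, hp⟩
  exact ⟨m, rfl, s, h hs, hp⟩

lemma eDist_union (E : V → V → Prop) (A B : Set V) (v : V) :
    eDist E (A ∪ B) v = min (eDist E A v) (eDist E B v) := by
  unfold eDist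
  rw [← sInf_union]
  congr 1
  ext n
  constructor
  · rintro ⟨m, rfl, s, hs | hs, hp⟩
    · exact Or.inl ⟨m, rfl, s, hs, hp⟩
    · exact Or.inr ⟨m, rfl, s, hs, hp⟩
  · rintro (⟨m, rfl, s, hs, hp⟩ | ⟨m, rfl, s, hs, hp⟩)
    · exact ⟨m, rfl, s, Or.inl hs, hp⟩
    · exact ⟨m, rfl, s, Or.inr hs, hp⟩

/-- Set-inclusion form of submodularity of the influence blocking set. -/
theorem stmt5 (pos neg : V → V → Prop)
    (hpos : LivePathRel pos) (hneg : LivePathRel neg)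
    (N₀ S T : Set V) (hST : S ⊆ T) (v : V) (hv : v ∉ T ∪ N₀) :
    IBS pos neg N₀ (T ∪ {v}) \ IBS pos neg N₀ T ⊆
      IBS pos neg N₀ (S ∪ {v}) \ IBS pos neg N₀ S := by
  rintro u ⟨⟨hA0, hnTv⟩, hnotT⟩
  have hfin := hA0.1
  -- From u ∉ IBS T and hA0, get NegActive under T
  have hT : NegActive pos neg N₀ T u := by
    by_contra h
    exact hnotT ⟨hA0, h⟩
  have hdT : eDist neg N₀ u ≤ eDist pos T u := hT.2
  -- From ¬NegActive (T ∪ {v}), dpos(T∪{v}) < dneg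
  have hlt : eDist pos (T ∪ {v}) u < eDist neg N₀ u := by
    by_contra h
    exact hnTv ⟨hfin, le_of_not_gt h⟩
  rw [eDist_union, min_lt_iff] at hlt
  have hv : eDist pos {v} u < eDist neg N₀ u :=
    hlt.resolve_left (not_lt_of_ge hdT)
  constructor
  · refine ⟨hA0, fun h => ?_⟩
    have : eDist pos (S ∪ {v}) u ≤ eDist pos {v} u :=
      eDist_anti pos (Set.subset_union_right) u
    exact absurd h.2 (not_le_of_gt (lt_of_le_of_lt this hv))
  · rintro ⟨-, hS⟩
    have : eDist pos T u ≤ eDist pos S u := eDist_anti pos hST u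
    exact hS ⟨hfin, hdT.trans this⟩
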